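/- arXiv:2402.15763 — 5 statements merged into one kernel-verified Lean document; each statement's English description precedes it below -/
import Mathlib

section
/- Let S be a bounded antilinear involution on H. For S-crossable T, the inverse of the crossing map satisfies Cross_S^{-1}(T) = Cross_S(T*)*, and Cross_S^{-1}(T) is uniquely determined by ⟨φ₁⊗ψ₁, Cross_S^{-1}(T)(φ₂⊗ψ₂)⟩ = ⟨Sφ₂⊗φ₁, T(ψ₂⊗S*ψ₁)⟩ for all vectors. -/
noncomputable section
open scoped InnerProductSpace ComplexConjugate

variable {H K : Type*}

/-- A realization of the Hilbert space tensor square of `H` on a Hilbert space `K`. -/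
structure TensorSquare (H K : Type*) [NormedAddCommGroup H] [InnerProductSpace ℂ H]
    [NormedAddCommGroup K] [InnerProductSpace ℂ K] : Type _ where
  tmul : H → H → K
  tmul_add_left : ∀ a a' b, tmul (a + a') b = tmul a b + tmul a' b
  tmul_add_right : ∀ a b b', tmul a (b + b') = tmul a b + tmul a b'
  tmul_smul_left : ∀ (c : ℂ) a b, tmul (c • a) b = c • tmul a b
  tmul_smul_right : ∀ (c : ℂ) a b, tmul a (c • b) = c • tmul a b
  inner_tmul : ∀ a b c d, ⟪tmul a b, tmul c d⟫_ℂ = ⟪a, c⟫_ℂ * ⟪b, d⟫_ℂ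
  dense_span : Dense (↑(Submodule.span ℂ (Set.range fun p : H × H => tmul p.1 p.2)) : Set K)

/-- A densely defined closed antilinear involution `S` on `H`, together with its adjoint `S*`. -/
structure AntiInvolution (H : Type*) [NormedAddCommGroup H] [InnerProductSpace ℂ H] : Type _ where
  dom : Submodule ℂ H
  toFun : H → H
  dense_dom : Dense (dom : Set H)
  map_add : ∀ x ∈ dom, ∀ y ∈ dom, toFun (x + y) = toFun x + toFun y
  map_smul : ∀ (c : ℂ), ∀ x ∈ dom, toFun (c • x) = (starRingEnd ℂ c) • toFun x
  invol_mem : ∀ x ∈ dom, toFun x ∈ dom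
  invol : ∀ x ∈ dom, toFun (toFun x) = x
  closed_graph : IsClosed {p : H × H | p.1 ∈ dom ∧ toFun p.1 = p.2}
  adjDom : Submodule ℂ H
  adjFun : H → H
  dense_adjDom : Dense (adjDom : Set H)
  adj_spec : ∀ y ∈ adjDom, ∀ x ∈ dom, ⟪adjFun y, x⟫_ℂ = ⟪toFun x, y⟫_ℂ
  adj_max : ∀ y z : H, (∀ x ∈ dom, ⟪z, x⟫_ℂ = ⟪toFun x, y⟫_ℂ) → y ∈ adjDom

section
variable [NormedAddCommGroup H] [InnerProductSpace ℂ H]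
  [NormedAddCommGroup K] [InnerProductSpace ℂ K]

/-- The crossing relation (unbounded `S`): `Tc = Cross_S(T)`. -/
def CrossRelU (τ : TensorSquare H K) (S : AntiInvolution H) (T Tc : K →L[ℂ] K) : Prop :=
  ∀ φ₁ ∈ S.dom, ∀ ψ₁ ∈ S.dom, ∀ φ₂ ∈ S.adjDom, ∀ ψ₂ ∈ S.adjDom,
    ⟪τ.tmul φ₁ φ₂, Tc (τ.tmul ψ₁ ψ₂)⟫_ℂ
      = ⟪τ.tmul φ₂ (S.adjFun ψ₂), T (τ.tmul (S.toFun φ₁) ψ₁)⟫_ℂ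

/-- The crossing relation for an everywhere defined (bounded) antilinear involution `S`
with adjoint `Sstar`. -/
def CrossRelB (τ : TensorSquare H K) (S Sstar : H →SL[starRingEnd ℂ] H) (T Tc : K →L[ℂ] K) :
    Prop :=
  ∀ φ₁ φ₂ ψ₁ ψ₂ : H,
    ⟪τ.tmul φ₁ φ₂, Tc (τ.tmul ψ₁ ψ₂)⟫_ℂ = ⟪τ.tmul φ₂ (Sstar ψ₂), T (τ.tmul (S φ₁) ψ₁)⟫_ℂ

end

section Aux
variable [NormedAddCommGroup H] [InnerProductSpace ℂ H]
  [NormedAddCommGroup K] [InnerProductSpace ℂ K]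

lemma tmul_unique_aux (τ : TensorSquare H K) {A B : K →L[ℂ] K}
    (h : ∀ a b c d : H,
      ⟪τ.tmul a b, A (τ.tmul c d)⟫_ℂ = ⟪τ.tmul a b, B (τ.tmul c d)⟫_ℂ) : A = B := by
  have hd := τ.dense_span
  have key : ∀ c d : H, A (τ.tmul c d) = B (τ.tmul c d) := by
    intro c d
    refine Dense.eq_of_inner_right (𝕜 := ℂ) hd ?_
    intro v hv
    refine Submodule.span_induction ?_ ?_ ?_ ?_ hv
    · rintro _ ⟨p, rfl⟩; exact h p.1 p.2 c d
    · simp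
    · intro x y _ _ hx hy; simp [inner_add_left, hx, hy]
    · intro r x _ hx; simp [inner_smul_left, hx]
  refine ContinuousLinearMap.ext_on hd ?_
  rintro _ ⟨p, rfl⟩
  exact key p.1 p.2

end Aux

/-- For a bounded antilinear involution `S`, the inverse of the crossing
map satisfies `Cross_S⁻¹(T) = Cross_S(T*)*`, and `Cross_S⁻¹(T)` is uniquely determined by
the inverse crossing relation
`⟨φ₁⊗ψ₁, Cross_S⁻¹(T)(φ₂⊗ψ₂)⟩ = ⟨Sφ₂⊗φ₁, T(ψ₂⊗S*ψ₁)⟩`. -/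
theorem crossing_map_inverse
    [NormedAddCommGroup H] [InnerProductSpace ℂ H] [CompleteSpace H]
    [NormedAddCommGroup K] [InnerProductSpace ℂ K] [CompleteSpace K]
    (τ : TensorSquare H K)
    (S Sstar : H →SL[starRingEnd ℂ] H)
    (hinv : ∀ x : H, S (S x) = x)
    (hadj : ∀ x y : H, ⟪Sstar y, x⟫_ℂ = ⟪S x, y⟫_ℂ) :
    -- Cross_S⁻¹(T) = Cross_S(T*)*: if Cross_S(X) = T then X = Cross_S(T*)*
    (∀ X T : K →L[ℂ] K, CrossRelB τ S Sstar X T →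
      ∃ C : K →L[ℂ] K, CrossRelB τ S Sstar (ContinuousLinearMap.adjoint T) C ∧
        X = ContinuousLinearMap.adjoint C) ∧
    -- the inverse crossing relation holds for X = Cross_S⁻¹(T)
    (∀ X T : K →L[ℂ] K, CrossRelB τ S Sstar X T →
      ∀ φ₁ ψ₁ φ₂ ψ₂ : H,
        ⟪τ.tmul φ₁ ψ₁, X (τ.tmul φ₂ ψ₂)⟫_ℂ = ⟪τ.tmul (S φ₂) φ₁, T (τ.tmul ψ₂ (Sstar ψ₁))⟫_ℂ) ∧
    -- and it is uniquely fixed by it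
    (∀ X X' T : K →L[ℂ] K,
      (∀ φ₁ ψ₁ φ₂ ψ₂ : H,
        ⟪τ.tmul φ₁ ψ₁, X (τ.tmul φ₂ ψ₂)⟫_ℂ = ⟪τ.tmul (S φ₂) φ₁, T (τ.tmul ψ₂ (Sstar ψ₁))⟫_ℂ) →
      (∀ φ₁ ψ₁ φ₂ ψ₂ : H,
        ⟪τ.tmul φ₁ ψ₁, X' (τ.tmul φ₂ ψ₂)⟫_ℂ = ⟪τ.tmul (S φ₂) φ₁, T (τ.tmul ψ₂ (Sstar ψ₁))⟫_ℂ) →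
      X = X') := by
  have hSS : ∀ x : H, Sstar (Sstar x) = x := by
    intro x
    refine ext_inner_right ℂ fun v => ?_
    rw [hadj, ← inner_conj_symm, hadj, hinv, inner_conj_symm]
  have inv_rel : ∀ X T : K →L[ℂ] K, CrossRelB τ S Sstar X T →
      ∀ φ₁ ψ₁ φ₂ ψ₂ : H,
        ⟪τ.tmul φ₁ ψ₁, X (τ.tmul φ₂ ψ₂)⟫_ℂ
          = ⟪τ.tmul (S φ₂) φ₁, T (τ.tmul ψ₂ (Sstar ψ₁))⟫_ℂ := by
    intro X T hX φ₁ ψ₁ φ₂ ψ₂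
    have := hX (S φ₂) φ₁ ψ₂ (Sstar ψ₁)
    rw [hinv, hSS] at this
    exact this.symm
  refine ⟨?_, inv_rel, ?_⟩
  · intro X T hX
    refine ⟨ContinuousLinearMap.adjoint X, ?_, (ContinuousLinearMap.adjoint_adjoint X).symm⟩
    intro a b c d
    rw [ContinuousLinearMap.adjoint_inner_right, ContinuousLinearMap.adjoint_inner_right,
      ← inner_conj_symm, ← inner_conj_symm (T (τ.tmul b (Sstar d)))]
    rw [inv_rel X T hX c d a b]
  · intro X X' T hX hX'
    refine tmul_unique_aux τ fun a b c d => ?_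
    rw [hX a b c d, hX' a b c d]
end
end

section
/- Let H ⊂ 𝓗 be a standard subspace with Tomita operator S_H, and T ∈ B(𝓗⊗𝓗) an S_H-crossable operator. Then T is S_H-crossing symmetric (Cross_{S_H}(T) = T*) if and only if for every ψ₁, ψ₂ ∈ 𝓗 the operator V_{ψ₁,ψ₂}(T) := ½(a_L(ψ₁) T a_R*(ψ₂) + a_L(ψ₂) T a_R*(ψ₁)) maps H into H. -/
noncomputable section
open scoped InnerProductSpace ComplexConjugate

variable {H K : Type*}

section Aux

variable [NormedAddCommGroup H] [InnerProductSpace ℂ H]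
  [NormedAddCommGroup K] [InnerProductSpace ℂ K]

namespace TensorSquare

variable (τ : TensorSquare H K)

lemma tmul_zero_left (b : H) : τ.tmul 0 b = 0 := by
  simpa using τ.tmul_smul_left 0 0 b

lemma tmul_sub_left (a a' b : H) : τ.tmul (a - a') b = τ.tmul a b - τ.tmul a' b := by
  have h : a - a' = a + (-1 : ℂ) • a' := by simp [sub_eq_add_neg]
  rw [h, τ.tmul_add_left, τ.tmul_smul_left]
  simp [sub_eq_add_neg]

lemma tmul_sub_right (a b b' : H) : τ.tmul a (b - b') = τ.tmul a b - τ.tmul a b' := by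
  have h : b - b' = b + (-1 : ℂ) • b' := by simp [sub_eq_add_neg]
  rw [h, τ.tmul_add_right, τ.tmul_smul_right]
  simp [sub_eq_add_neg]

lemma norm_tmul (a b : H) : ‖τ.tmul a b‖ = ‖a‖ * ‖b‖ := by
  have h1 : ‖τ.tmul a b‖ ^ 2 = ‖a‖ ^ 2 * ‖b‖ ^ 2 := by
    have h := inner_self_eq_norm_sq (𝕜 := ℂ) (τ.tmul a b)
    rw [τ.inner_tmul, inner_self_eq_norm_sq_to_K, inner_self_eq_norm_sq_to_K] at h
    simpa [← Complex.ofReal_pow] using h.symm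
  nlinarith [norm_nonneg (τ.tmul a b), norm_nonneg a, norm_nonneg b,
    mul_nonneg (norm_nonneg a) (norm_nonneg b)]

lemma continuous_tmul_left (b : H) : Continuous fun a => τ.tmul a b := by
  refine (LipschitzWith.of_dist_le_mul (K := ‖b‖₊) fun x y => ?_).continuous
  rw [dist_eq_norm, dist_eq_norm, ← τ.tmul_sub_left, τ.norm_tmul]
  simp [mul_comm]

lemma continuous_tmul_right (a : H) : Continuous fun b => τ.tmul a b := by
  refine (LipschitzWith.of_dist_le_mul (K := ‖a‖₊) fun x y => ?_).continuous
  rw [dist_eq_norm, dist_eq_norm, ← τ.tmul_sub_right, τ.norm_tmul]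
  simp

end TensorSquare

lemma ext_inner_dense {s : Set H} (hs : Dense s) {a b : H}
    (h : ∀ x ∈ s, ⟪a, x⟫_ℂ = ⟪b, x⟫_ℂ) : a = b := by
  refine ext_inner_right ℂ fun v => ?_
  have hfg : (fun x : H => ⟪a, x⟫_ℂ) = fun x => ⟪b, x⟫_ℂ :=
    (continuous_const.inner continuous_id).ext_on hs
      (continuous_const.inner continuous_id) h
  exact congrFun hfg v

lemma inner_aL (τ : TensorSquare H K) (aL : H → (K →L[ℂ] H))
    (haL : ∀ ψ u v : H, aL ψ (τ.tmul u v) = ⟪ψ, u⟫_ℂ • v)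
    (ψ y : H) (k : K) : ⟪y, aL ψ k⟫_ℂ = ⟪τ.tmul ψ y, k⟫_ℂ := by
  have h : (innerSL ℂ y).comp (aL ψ) = innerSL ℂ (τ.tmul ψ y) := by
    refine ContinuousLinearMap.ext_on τ.dense_span ?_
    rintro x ⟨p, rfl⟩
    simp [haL, τ.inner_tmul, inner_smul_right]
  have := DFunLike.congr_fun h k
  simpa using this

end Aux
section Aux2

variable [NormedAddCommGroup H] [InnerProductSpace ℂ H]

namespace AntiInvolution

variable (S : AntiInvolution H)

lemma adjFun_mem {y : H} (hy : y ∈ S.adjDom) : S.adjFun y ∈ S.adjDom := by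
  refine S.adj_max (S.adjFun y) y fun x hx => ?_
  have h1 : ⟪S.adjFun y, S.toFun x⟫_ℂ = ⟪S.toFun (S.toFun x), y⟫_ℂ :=
    S.adj_spec y hy _ (S.invol_mem x hx)
  rw [S.invol x hx] at h1
  calc ⟪y, x⟫_ℂ = conj ⟪x, y⟫_ℂ := (inner_conj_symm _ _).symm
    _ = conj ⟪S.adjFun y, S.toFun x⟫_ℂ := by rw [h1]
    _ = ⟪S.toFun x, S.adjFun y⟫_ℂ := inner_conj_symm _ _

lemma adjFun_invol {y : H} (hy : y ∈ S.adjDom) : S.adjFun (S.adjFun y) = y := by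
  refine ext_inner_dense S.dense_dom fun x hx => ?_
  rw [S.adj_spec _ (S.adjFun_mem hy) x hx]
  calc ⟪S.toFun x, S.adjFun y⟫_ℂ = conj ⟪S.adjFun y, S.toFun x⟫_ℂ :=
        (inner_conj_symm _ _).symm
    _ = conj ⟪S.toFun (S.toFun x), y⟫_ℂ := by rw [S.adj_spec y hy _ (S.invol_mem x hx)]
    _ = conj ⟪x, y⟫_ℂ := by rw [S.invol x hx]
    _ = ⟪y, x⟫_ℂ := inner_conj_symm _ _

lemma adjFun_add {y y' : H} (hy : y ∈ S.adjDom) (hy' : y' ∈ S.adjDom) :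
    S.adjFun (y + y') = S.adjFun y + S.adjFun y' := by
  refine ext_inner_dense S.dense_dom fun x hx => ?_
  rw [S.adj_spec _ (S.adjDom.add_mem hy hy') x hx, inner_add_left,
    S.adj_spec y hy x hx, S.adj_spec y' hy' x hx, inner_add_right]

lemma adjFun_smul (c : ℂ) {y : H} (hy : y ∈ S.adjDom) :
    S.adjFun (c • y) = conj c • S.adjFun y := by
  refine ext_inner_dense S.dense_dom fun x hx => ?_
  rw [S.adj_spec _ (S.adjDom.smul_mem c hy) x hx, inner_smul_left, inner_smul_right,
    S.adj_spec y hy x hx]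
  simp

end AntiInvolution

end Aux2
section Aux3

variable [NormedAddCommGroup H] [InnerProductSpace ℂ H]

/-- Elements of `Hr` are in the domain of `S` and fixed by it. -/
lemma Hr_mem_dom (Hr : Submodule ℝ H) (S : AntiInvolution H)
    (hSdom : ∀ x : H, x ∈ S.dom ↔ ∃ h₁ ∈ Hr, ∃ h₂ ∈ Hr, x = h₁ + Complex.I • h₂)
    (hSfun : ∀ h₁ ∈ Hr, ∀ h₂ ∈ Hr, S.toFun (h₁ + Complex.I • h₂) = h₁ - Complex.I • h₂)
    {h : H} (hh : h ∈ Hr) : h ∈ S.dom ∧ S.toFun h = h := by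
  have hd : h ∈ S.dom := (hSdom h).mpr ⟨h, hh, 0, Hr.zero_mem, by simp⟩
  refine ⟨hd, ?_⟩
  have := hSfun h hh 0 Hr.zero_mem
  simpa using this

/-- If `y` pairs real with every element of `Hr`, then `y` is a fixed point of `S*`. -/
lemma fix_of_im (Hr : Submodule ℝ H) (S : AntiInvolution H)
    (hSdom : ∀ x : H, x ∈ S.dom ↔ ∃ h₁ ∈ Hr, ∃ h₂ ∈ Hr, x = h₁ + Complex.I • h₂)
    (hSfun : ∀ h₁ ∈ Hr, ∀ h₂ ∈ Hr, S.toFun (h₁ + Complex.I • h₂) = h₁ - Complex.I • h₂)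
    {y : H} (hy : ∀ h ∈ Hr, (⟪y, h⟫_ℂ).im = 0) :
    y ∈ S.adjDom ∧ S.adjFun y = y := by
  have key : ∀ x ∈ S.dom, ⟪y, x⟫_ℂ = ⟪S.toFun x, y⟫_ℂ := by
    intro x hx
    obtain ⟨h₁, hh₁, h₂, hh₂, rfl⟩ := (hSdom x).mp hx
    rw [hSfun h₁ hh₁ h₂ hh₂]
    have e1 : ⟪h₁, y⟫_ℂ = ⟪y, h₁⟫_ℂ := by
      rw [← inner_conj_symm]
      exact Complex.conj_eq_iff_im.mpr (hy h₁ hh₁)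
    have e2 : ⟪h₂, y⟫_ℂ = ⟪y, h₂⟫_ℂ := by
      rw [← inner_conj_symm]
      exact Complex.conj_eq_iff_im.mpr (hy h₂ hh₂)
    rw [inner_add_right, inner_smul_right, inner_sub_left, inner_smul_left, e1, e2,
      Complex.conj_I]
    ring
  have hmem : y ∈ S.adjDom := S.adj_max y y key
  refine ⟨hmem, ext_inner_dense S.dense_dom fun x hx => ?_⟩
  rw [S.adj_spec y hmem x hx, ← key x hx]

/-- Fixed points of `S*` pair real with every element of `Hr`. -/
lemma im_of_mem (Hr : Submodule ℝ H) (S : AntiInvolution H)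
    (hSdom : ∀ x : H, x ∈ S.dom ↔ ∃ h₁ ∈ Hr, ∃ h₂ ∈ Hr, x = h₁ + Complex.I • h₂)
    (hSfun : ∀ h₁ ∈ Hr, ∀ h₂ ∈ Hr, S.toFun (h₁ + Complex.I • h₂) = h₁ - Complex.I • h₂)
    {y : H} (hy : y ∈ S.adjDom) (hfix : S.adjFun y = y)
    {h : H} (hh : h ∈ Hr) : (⟪y, h⟫_ℂ).im = 0 := by
  obtain ⟨hd, hfun⟩ := Hr_mem_dom Hr S hSdom hSfun hh
  have h1 : ⟪S.adjFun y, h⟫_ℂ = ⟪S.toFun h, y⟫_ℂ := S.adj_spec y hy h hd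
  rw [hfix, hfun] at h1
  have h2 : conj ⟪y, h⟫_ℂ = ⟪y, h⟫_ℂ := by
    conv_lhs => rw [inner_conj_symm]
    exact h1.symm
  exact Complex.conj_eq_iff_im.mp h2

/-- The Hahn–Banach style converse: membership in the closed real subspace `Hr`. -/
lemma mem_of_im [CompleteSpace H] (Hr : Submodule ℝ H) (hclosed : IsClosed (Hr : Set H))
    {x : H} (hx : ∀ y : H, (∀ h ∈ Hr, (⟪y, h⟫_ℂ).im = 0) → (⟪y, x⟫_ℂ).im = 0) :
    x ∈ Hr := by
  letI : InnerProductSpace ℝ H := InnerProductSpace.rclikeToReal ℂ H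
  haveI : CompleteSpace Hr := hclosed.completeSpace_coe
  rw [← Submodule.orthogonal_orthogonal Hr, Submodule.mem_orthogonal]
  intro v hv
  have hre : ∀ h ∈ Hr, (⟪v, h⟫_ℂ).re = 0 := by
    intro h hh
    have h0 : (⟪h, v⟫_ℂ).re = 0 := (Submodule.mem_orthogonal Hr v).mp hv h hh
    rw [← inner_conj_symm, Complex.conj_re]
    exact h0
  have him : ∀ h ∈ Hr, (⟪-(Complex.I) • v, h⟫_ℂ).im = 0 := by
    intro h hh
    rw [inner_smul_left]
    simp [hre h hh]
  have h3 : (⟪v, x⟫_ℂ).re = 0 := by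
    have h2 := hx (-(Complex.I) • v) him
    rw [inner_smul_left] at h2
    simpa using h2
  exact h3

/-- Membership criterion for `Hr` in terms of fixed points of `S*`. -/
lemma mem_Hr_iff [CompleteSpace H] (Hr : Submodule ℝ H) (hclosed : IsClosed (Hr : Set H))
    (S : AntiInvolution H)
    (hSdom : ∀ x : H, x ∈ S.dom ↔ ∃ h₁ ∈ Hr, ∃ h₂ ∈ Hr, x = h₁ + Complex.I • h₂)
    (hSfun : ∀ h₁ ∈ Hr, ∀ h₂ ∈ Hr, S.toFun (h₁ + Complex.I • h₂) = h₁ - Complex.I • h₂)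
    (x : H) :
    x ∈ Hr ↔ ∀ y ∈ S.adjDom, S.adjFun y = y → (⟪y, x⟫_ℂ).im = 0 := by
  constructor
  · intro hx y hy hfix
    exact im_of_mem Hr S hSdom hSfun hy hfix hx
  · intro hx
    refine mem_of_im Hr hclosed fun y hy => ?_
    obtain ⟨hmem, hfix⟩ := fix_of_im Hr S hSdom hSfun hy
    exact hx y hmem hfix

end Aux3
section Aux4

variable [NormedAddCommGroup H] [InnerProductSpace ℂ H]

namespace AntiInvolution

variable (S : AntiInvolution H)

lemma adjFun_sub {y y' : H} (hy : y ∈ S.adjDom) (hy' : y' ∈ S.adjDom) :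
    S.adjFun (y - y') = S.adjFun y - S.adjFun y' := by
  have h : y - y' = y + (-1 : ℂ) • y' := by simp [sub_eq_add_neg]
  rw [h, S.adjFun_add hy (S.adjDom.smul_mem _ hy'), S.adjFun_smul _ hy']
  simp [sub_eq_add_neg]

lemma exists_fix_decomp {w : H} (hw : w ∈ S.adjDom) :
    ∃ y₁ y₂ : H, y₁ ∈ S.adjDom ∧ S.adjFun y₁ = y₁ ∧ y₂ ∈ S.adjDom ∧ S.adjFun y₂ = y₂ ∧
      w = y₁ + Complex.I • y₂ ∧ S.adjFun w = y₁ - Complex.I • y₂ := by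
  have hFw := S.adjFun_mem hw
  have c1 : (starRingEnd ℂ) (2⁻¹ : ℂ) = 2⁻¹ := by simp [Complex.ext_iff]
  have c2 : (starRingEnd ℂ) (-((2⁻¹ : ℂ) * Complex.I)) = (2⁻¹ : ℂ) * Complex.I := by
    simp [Complex.ext_iff]
  refine ⟨(2⁻¹ : ℂ) • (w + S.adjFun w), (-((2⁻¹ : ℂ) * Complex.I)) • (w - S.adjFun w),
    S.adjDom.smul_mem _ (S.adjDom.add_mem hw hFw),
    ?_, S.adjDom.smul_mem _ (S.adjDom.sub_mem hw hFw), ?_, ?_, ?_⟩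
  · rw [S.adjFun_smul _ (S.adjDom.add_mem hw hFw), S.adjFun_add hw hFw, S.adjFun_invol hw, c1,
      add_comm]
  · rw [S.adjFun_smul _ (S.adjDom.sub_mem hw hFw), S.adjFun_sub hw hFw, S.adjFun_invol hw, c2]
    module
  · rw [smul_smul, show Complex.I * -(2⁻¹ * Complex.I) = 2⁻¹ by simp [Complex.ext_iff]]
    module
  · rw [smul_smul, show Complex.I * -(2⁻¹ * Complex.I) = 2⁻¹ by simp [Complex.ext_iff]]
    module

end AntiInvolution

end Aux4
/-- Let `Hr ⊂ 𝓗` be a standard subspace with Tomita operator `S` and let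
`T` be `S`-crossable. Then `T` is `S`-crossing symmetric, `Cross_S(T) = T*`, iff for all
`ψ₁, ψ₂` the operator `V_{ψ₁,ψ₂}(T) = ½(a_L(ψ₁) T a_R*(ψ₂) + a_L(ψ₂) T a_R*(ψ₁))` maps
`Hr` into `Hr`. Here `a_L(ψ)(u ⊗ v) = ⟨ψ, u⟩ v` and `a_R*(ψ) ξ = ξ ⊗ ψ`. -/
theorem crossing_symmetric_iff_endomorphisms
    [NormedAddCommGroup H] [InnerProductSpace ℂ H] [CompleteSpace H]
    [NormedAddCommGroup K] [InnerProductSpace ℂ K] [CompleteSpace K]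
    (τ : TensorSquare H K)
    -- the standard subspace
    (Hr : Submodule ℝ H) (hclosed : IsClosed (Hr : Set H))
    (hsep : ∀ x ∈ Hr, ∀ y ∈ Hr, x = Complex.I • y → x = 0)
    (hdense : Dense {x : H | ∃ h₁ ∈ Hr, ∃ h₂ ∈ Hr, x = h₁ + Complex.I • h₂})
    -- its Tomita operator
    (S : AntiInvolution H)
    (hSdom : ∀ x : H, x ∈ S.dom ↔ ∃ h₁ ∈ Hr, ∃ h₂ ∈ Hr, x = h₁ + Complex.I • h₂)
    (hSfun : ∀ h₁ ∈ Hr, ∀ h₂ ∈ Hr, S.toFun (h₁ + Complex.I • h₂) = h₁ - Complex.I • h₂)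
    -- the left annihilation operators
    (aL : H → (K →L[ℂ] H)) (haL : ∀ ψ u v : H, aL ψ (τ.tmul u v) = ⟪ψ, u⟫_ℂ • v)
    (T : K →L[ℂ] K) (hcrossable : ∃ C : K →L[ℂ] K, CrossRelU τ S T C) :
    CrossRelU τ S T (ContinuousLinearMap.adjoint T) ↔
      ∀ ψ₁ ψ₂ : H, ∀ h ∈ Hr,
        (2⁻¹ : ℂ) • (aL ψ₁ (T (τ.tmul h ψ₂)) + aL ψ₂ (T (τ.tmul h ψ₁))) ∈ Hr := by
  have haL' : ∀ ψ y : H, ∀ k : K, ⟪y, aL ψ k⟫_ℂ = ⟪τ.tmul ψ y, k⟫_ℂ :=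
    fun ψ y k => inner_aL τ aL haL ψ y k
  -- the symmetrized quadratic form
  have hinner : ∀ y a b h' : H,
      ⟪y, (2⁻¹ : ℂ) • (aL a (T (τ.tmul h' b)) + aL b (T (τ.tmul h' a)))⟫_ℂ
        = 2⁻¹ * (⟪τ.tmul a y, T (τ.tmul h' b)⟫_ℂ + ⟪τ.tmul b y, T (τ.tmul h' a)⟫_ℂ) := by
    intro y a b h'
    rw [inner_smul_right, inner_add_right, haL', haL']
  constructor
  · -- crossing symmetry implies the endomorphism property
    intro hcross ψ₁ ψ₂ h hh
    obtain ⟨hdomh, hSh⟩ := Hr_mem_dom Hr S hSdom hSfun hh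
    rw [mem_Hr_iff Hr hclosed S hSdom hSfun]
    intro y hy hfix
    rw [hinner]
    have main : ∀ p : H × H,
        (⟪τ.tmul p.1 y, T (τ.tmul h p.2)⟫_ℂ + ⟪τ.tmul p.2 y, T (τ.tmul h p.1)⟫_ℂ).im = 0 := by
      have hcont : Continuous fun p : H × H =>
          (⟪τ.tmul p.1 y, T (τ.tmul h p.2)⟫_ℂ + ⟪τ.tmul p.2 y, T (τ.tmul h p.1)⟫_ℂ).im :=
        Complex.continuous_im.comp (Continuous.add
          (Continuous.inner ((τ.continuous_tmul_left y).comp continuous_fst)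
            (T.continuous.comp ((τ.continuous_tmul_right h).comp continuous_snd)))
          (Continuous.inner ((τ.continuous_tmul_left y).comp continuous_snd)
            (T.continuous.comp ((τ.continuous_tmul_right h).comp continuous_fst))))
      have hclosedset : IsClosed {p : H × H |
          (⟪τ.tmul p.1 y, T (τ.tmul h p.2)⟫_ℂ + ⟪τ.tmul p.2 y, T (τ.tmul h p.1)⟫_ℂ).im = 0} :=
        isClosed_eq hcont continuous_const
      have hsub : (S.dom : Set H) ×ˢ (S.adjDom : Set H) ⊆ {p : H × H |
          (⟪τ.tmul p.1 y, T (τ.tmul h p.2)⟫_ℂ + ⟪τ.tmul p.2 y, T (τ.tmul h p.1)⟫_ℂ).im = 0} := by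
        rintro ⟨a, b⟩ ⟨ha, hb⟩
        have hc := hcross h hdomh a ha b hb y hy
        rw [ContinuousLinearMap.adjoint_inner_right, hSh, hfix] at hc
        rw [← inner_conj_symm] at hc
        show (⟪τ.tmul a y, T (τ.tmul h b)⟫_ℂ + ⟪τ.tmul b y, T (τ.tmul h a)⟫_ℂ).im = 0
        rw [← hc, Complex.add_im, Complex.conj_im]
        ring
      have hdp : Dense ((S.dom : Set H) ×ˢ (S.adjDom : Set H)) :=
        S.dense_dom.prod S.dense_adjDom
      intro p
      have hcl := hclosedset.closure_subset_iff.mpr hsub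
      exact hcl (by rw [hdp.closure_eq]; trivial)
    have hmain := main (ψ₁, ψ₂)
    rw [Complex.mul_im]
    simp only at hmain
    rw [hmain]
    simp
  · -- the endomorphism property implies crossing symmetry
    intro hV
    have step1 : ∀ h' ∈ Hr, ∀ y ∈ S.adjDom, S.adjFun y = y → ∀ a b : H,
        ⟪τ.tmul b y, T (τ.tmul h' a)⟫_ℂ = conj ⟪τ.tmul a y, T (τ.tmul h' b)⟫_ℂ := by
      intro h' hh y hy hfix a b
      have base : ∀ a b : H,
          (⟪τ.tmul a y, T (τ.tmul h' b)⟫_ℂ + ⟪τ.tmul b y, T (τ.tmul h' a)⟫_ℂ).im = 0 := by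
        intro a b
        have hmem := hV a b h' hh
        have him := im_of_mem Hr S hSdom hSfun hy hfix hmem
        rw [hinner, Complex.mul_im] at him
        simpa using him
      have e1 := base a b
      have e2 := base (Complex.I • a) b
      rw [τ.tmul_smul_left, τ.tmul_smul_right, inner_smul_left, map_smul, inner_smul_right,
        Complex.conj_I] at e2
      set A := ⟪τ.tmul a y, T (τ.tmul h' b)⟫_ℂ with hA
      set B := ⟪τ.tmul b y, T (τ.tmul h' a)⟫_ℂ with hB
      have r1 : A.im + B.im = 0 := by simpa using e1
      have r2 : -A.re + B.re = 0 := by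
        have : (-Complex.I * A + Complex.I * B).im = 0 := e2
        simpa [Complex.add_im, Complex.mul_im] using this
      apply Complex.ext
      · simp only [Complex.conj_re]; linarith
      · simp only [Complex.conj_im]; linarith
    have step2 : ∀ φ ∈ S.dom, ∀ y ∈ S.adjDom, S.adjFun y = y → ∀ a b : H,
        ⟪τ.tmul b y, T (τ.tmul φ a)⟫_ℂ
          = conj ⟪τ.tmul a y, T (τ.tmul (S.toFun φ) b)⟫_ℂ := by
      intro φ hφ y hy hfix a b
      obtain ⟨h₁, hh₁, h₂, hh₂, rfl⟩ := (hSdom φ).mp hφ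
      rw [hSfun h₁ hh₁ h₂ hh₂]
      rw [τ.tmul_add_left, τ.tmul_smul_left, map_add, map_smul, inner_add_right, inner_smul_right,
        τ.tmul_sub_left, τ.tmul_smul_left, map_sub, map_smul, inner_sub_right, inner_smul_right,
        step1 h₁ hh₁ y hy hfix a b, step1 h₂ hh₂ y hy hfix a b, map_sub, map_mul, Complex.conj_I]
      ring
    have step3 : ∀ φ ∈ S.dom, ∀ w ∈ S.adjDom, ∀ a b : H,
        ⟪τ.tmul b w, T (τ.tmul φ a)⟫_ℂ
          = conj ⟪τ.tmul a (S.adjFun w), T (τ.tmul (S.toFun φ) b)⟫_ℂ := by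
      intro φ hφ w hw a b
      obtain ⟨y₁, y₂, hy₁, hfix₁, hy₂, hfix₂, hdec, hFdec⟩ := S.exists_fix_decomp hw
      rw [hFdec, hdec, τ.tmul_add_right, τ.tmul_smul_right, inner_add_left, inner_smul_left,
        τ.tmul_sub_right, τ.tmul_smul_right, inner_sub_left, inner_smul_left,
        step2 φ hφ y₁ hy₁ hfix₁ a b, step2 φ hφ y₂ hy₂ hfix₂ a b, map_sub, map_mul,
        Complex.conj_conj, Complex.conj_I]
      ring
    intro φ₁ hφ₁ ψ₁ hψ₁ φ₂ hφ₂ ψ₂ hψ₂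
    rw [ContinuousLinearMap.adjoint_inner_right]
    have hkey := step3 (S.toFun φ₁) (S.invol_mem φ₁ hφ₁) (S.adjFun ψ₂) (S.adjFun_mem hψ₂) ψ₁ φ₂
    rw [S.invol φ₁ hφ₁, S.adjFun_invol hψ₂] at hkey
    rw [hkey]
    exact (inner_conj_symm _ _).symm
end
end

section
/- Let H be a standard subspace of 𝓗, R ∈ B(𝓗) self-adjoint, and V ∈ B(𝓗) with V H ⊂ H. Then (R⊗V)F is the unique S_H-crossing symmetric operator T such that a_L(ψ) T a_R*(ψ) = ⟨ψ, Rψ⟩ V for all ψ ∈ 𝓗, where F is the tensor flip. -/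
noncomputable section
open scoped InnerProductSpace ComplexConjugate

variable {H K : Type*}

/-- Let `Hr` be a standard subspace of `𝓗` with Tomita operator `S`,
`R` self-adjoint, and `V` an endomorphism of `Hr`. Then `(R ⊗ V)F` (realized by `T₀`, acting
on simple tensors by `v ⊗ w ↦ (R w) ⊗ (V v)`) is the unique `S`-crossing symmetric operator
`T` with `a_L(ψ) T a_R*(ψ) = ⟨ψ, Rψ⟩ V` for all `ψ`. -/
theorem prod_endo_flip_unique_crossing_symmetric
    [NormedAddCommGroup H] [InnerProductSpace ℂ H] [CompleteSpace H]
    [NormedAddCommGroup K] [InnerProductSpace ℂ K] [CompleteSpace K]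
    (τ : TensorSquare H K)
    (Hr : Submodule ℝ H) (hclosed : IsClosed (Hr : Set H))
    (hsep : ∀ x ∈ Hr, ∀ y ∈ Hr, x = Complex.I • y → x = 0)
    (hdense : Dense {x : H | ∃ h₁ ∈ Hr, ∃ h₂ ∈ Hr, x = h₁ + Complex.I • h₂})
    (S : AntiInvolution H)
    (hSdom : ∀ x : H, x ∈ S.dom ↔ ∃ h₁ ∈ Hr, ∃ h₂ ∈ Hr, x = h₁ + Complex.I • h₂)
    (hSfun : ∀ h₁ ∈ Hr, ∀ h₂ ∈ Hr, S.toFun (h₁ + Complex.I • h₂) = h₁ - Complex.I • h₂)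
    (aL : H → (K →L[ℂ] H)) (haL : ∀ ψ u v : H, aL ψ (τ.tmul u v) = ⟪ψ, u⟫_ℂ • v)
    (R V : H →L[ℂ] H) (hR : IsSelfAdjoint R) (hV : ∀ h ∈ Hr, V h ∈ Hr)
    (T₀ : K →L[ℂ] K) (hT₀ : ∀ v w : H, T₀ (τ.tmul v w) = τ.tmul (R w) (V v)) :
    -- T₀ is S-crossing symmetric
    CrossRelU τ S T₀ (ContinuousLinearMap.adjoint T₀) ∧
    -- with V_ψ(T₀) = ⟨ψ, Rψ⟩ V
    (∀ ψ ξ : H, aL ψ (T₀ (τ.tmul ξ ψ)) = ⟪ψ, R ψ⟫_ℂ • V ξ) ∧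
    -- and it is the unique such crossing symmetric operator
    (∀ T : K →L[ℂ] K, CrossRelU τ S T (ContinuousLinearMap.adjoint T) →
      (∀ ψ ξ : H, aL ψ (T (τ.tmul ξ ψ)) = ⟪ψ, R ψ⟫_ℂ • V ξ) → T = T₀) := by
  have hds := τ.dense_span
  -- aL is antilinear in its parameter
  have haL_add : ∀ ψ χ : H, aL (ψ + χ) = aL ψ + aL χ := by
    intro ψ χ
    apply ContinuousLinearMap.ext_on hds
    rintro _ ⟨p, rfl⟩
    simp [haL, inner_add_left, add_smul]
  have haL_smul : ∀ (c : ℂ) (ψ : H), aL (c • ψ) = (starRingEnd ℂ c) • aL ψ := by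
    intro c ψ
    apply ContinuousLinearMap.ext_on hds
    rintro _ ⟨p, rfl⟩
    simp [haL, inner_smul_left, smul_smul, mul_comm]
  -- bridging: ⟪τ ψ η, m⟫ = ⟪η, aL ψ m⟫
  have hbridge : ∀ (ψ η : H) (m : K), ⟪τ.tmul ψ η, m⟫_ℂ = ⟪η, aL ψ m⟫_ℂ := by
    intro ψ η
    have h : (innerSL ℂ (τ.tmul ψ η) : K →L[ℂ] ℂ) = (innerSL ℂ η).comp (aL ψ) := by
      apply ContinuousLinearMap.ext_on hds
      rintro _ ⟨p, rfl⟩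
      simp [haL, τ.inner_tmul, inner_smul_right]
    intro m
    have := DFunLike.congr_fun h m
    simpa using this
  refine ⟨?_, ?_, ?_⟩
  · -- crossing symmetry of T₀
    intro φ₁ hφ₁ ψ₁ hψ₁ φ₂ hφ₂ ψ₂ hψ₂
    obtain ⟨h₁, hh₁, h₂, hh₂, rfl⟩ := (hSdom φ₁).mp hφ₁
    have hSφ₁ : S.toFun (h₁ + Complex.I • h₂) = h₁ + Complex.I • (-h₂) := by
      rw [hSfun h₁ hh₁ h₂ hh₂]; simp [sub_eq_add_neg]
    have hVrep : V (S.toFun (h₁ + Complex.I • h₂)) = V h₁ + Complex.I • (-(V h₂)) := by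
      rw [hSφ₁]; simp
    have hVS_mem : V (S.toFun (h₁ + Complex.I • h₂)) ∈ S.dom := by
      rw [hSdom]
      exact ⟨V h₁, hV _ hh₁, -(V h₂), Hr.neg_mem (hV _ hh₂), hVrep⟩
    have hSVS : S.toFun (V (S.toFun (h₁ + Complex.I • h₂))) = V (h₁ + Complex.I • h₂) := by
      rw [hVrep, hSfun _ (hV _ hh₁) _ (Hr.neg_mem (hV _ hh₂))]
      simp [sub_eq_add_neg]
    rw [ContinuousLinearMap.adjoint_inner_right, hT₀, hT₀, τ.inner_tmul, τ.inner_tmul]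
    have hRinner : ⟪R φ₂, ψ₁⟫_ℂ = ⟪φ₂, R ψ₁⟫_ℂ := by
      conv_lhs => rw [← ContinuousLinearMap.isSelfAdjoint_iff'.mp hR]
      exact ContinuousLinearMap.adjoint_inner_left R ψ₁ φ₂
    have hSinner : ⟪S.adjFun ψ₂, V (S.toFun (h₁ + Complex.I • h₂))⟫_ℂ
        = ⟪V (h₁ + Complex.I • h₂), ψ₂⟫_ℂ := by
      rw [S.adj_spec ψ₂ hψ₂ _ hVS_mem, hSVS]
    rw [hRinner, hSinner]
  · intro ψ ξ
    rw [hT₀, haL]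
  · -- uniqueness
    intro T _hcross hdiag
    have key : ∀ ψ χ ξ : H, aL ψ (T (τ.tmul ξ χ)) = ⟪ψ, R χ⟫_ℂ • V ξ := by
      intro ψ χ ξ
      set B : H → H → H := fun a b => aL a (T (τ.tmul ξ b)) - ⟪a, R b⟫_ℂ • V ξ with hB
      have hd : ∀ a, B a a = 0 := by
        intro a; simp [hB, hdiag a ξ]
      have hB1 : ∀ a b c, B (a + b) c = B a c + B b c := by
        intro a b c
        simp only [hB, haL_add, ContinuousLinearMap.add_apply, inner_add_left, add_smul]
        abel
      have hB2 : ∀ a b c, B a (b + c) = B a b + B a c := by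
        intro a b c
        simp only [hB, τ.tmul_add_right, map_add, inner_add_right, add_smul]
        abel
      have hBs1 : ∀ (t : ℂ) a b, B (t • a) b = (starRingEnd ℂ t) • B a b := by
        intro t a b
        simp only [hB, haL_smul, ContinuousLinearMap.smul_apply, inner_smul_left, smul_sub,
          smul_smul]
      have hBs2 : ∀ (t : ℂ) a b, B a (t • b) = t • B a b := by
        intro t a b
        simp only [hB, τ.tmul_smul_right, map_smul, inner_smul_right, smul_sub, smul_smul]
      have h1 : B ψ χ + B χ ψ = 0 := by
        have h := hd (ψ + χ)
        rw [hB1, hB2, hB2, hd, hd] at h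
        rw [← h]; abel
      have h2 : B ψ χ = B χ ψ := by
        have h := hd (ψ + Complex.I • χ)
        rw [hB1, hB2, hB2, hd, hBs2, hBs1, hBs1, hBs2, hd] at h
        rw [Complex.conj_I] at h
        simp only [smul_zero, add_zero, zero_add, neg_smul] at h
        have hI : Complex.I • (B ψ χ - B χ ψ) = Complex.I • (0 : H) := by
          rw [smul_zero, smul_sub, sub_eq_add_neg]
          exact h
        exact sub_eq_zero.mp (smul_right_injective H Complex.I_ne_zero hI)
      have hzero : B ψ χ = 0 := by
        have h3 : (2 : ℂ) • B ψ χ = 0 := by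
          rw [two_smul]
          nth_rewrite 2 [h2]
          exact h1
        exact (smul_eq_zero.mp h3).resolve_left two_ne_zero
      simpa [hB, sub_eq_zero] using hzero
    -- T agrees with T₀ on simple tensors
    have hsim : ∀ ξ χ : H, T (τ.tmul ξ χ) = T₀ (τ.tmul ξ χ) := by
      intro ξ χ
      set x : K := T (τ.tmul ξ χ) - T₀ (τ.tmul ξ χ) with hx
      have horth : ∀ ψ η : H, ⟪τ.tmul ψ η, x⟫_ℂ = 0 := by
        intro ψ η
        rw [hx, inner_sub_right, hbridge, hbridge, key, hT₀, haL, inner_smul_right, sub_self]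
      have hspan : ∀ y ∈ Submodule.span ℂ (Set.range fun p : H × H => τ.tmul p.1 p.2),
          ⟪y, x⟫_ℂ = 0 := by
        intro y hy
        induction hy using Submodule.span_induction with
        | mem y hy => obtain ⟨p, rfl⟩ := hy; exact horth p.1 p.2
        | zero => simp
        | add a b _ _ ha hb => rw [inner_add_left, ha, hb, add_zero]
        | smul t a _ ha => rw [inner_smul_left, ha, mul_zero]
      have hfun : (fun y : K => ⟪y, x⟫_ℂ) = fun _ => (0 : ℂ) :=
        Continuous.ext_on hds (by continuity) continuous_const hspan
      have hxx : ⟪x, x⟫_ℂ = 0 := congrFun hfun x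
      have : x = 0 := inner_self_eq_zero.mp hxx
      rw [hx] at this
      exact sub_eq_zero.mp this
    apply ContinuousLinearMap.ext_on hds
    rintro _ ⟨p, rfl⟩
    exact hsim p.1 p.2
end
end

section
/- On 𝓗 = L²(ℝ, dθ), let (J_H ψ)(θ) = conj(ψ(θ)) and (Δ_H^{it}ψ)(θ) = ψ(θ − 2πt), defining a standard subspace H. For φ ∈ H^∞(𝕊_π) (bounded analytic on the strip 0 < Im ζ < π) with boundary values satisfying φ(θ+iπ) = conj(φ(θ)), the operator (T_φ Ψ)(θ₁,θ₂) = φ(θ₂−θ₁)Ψ(θ₂,θ₁) on L²(ℝ²) is S_H-crossing symmetric. -/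
noncomputable section
open scoped InnerProductSpace ComplexConjugate

variable {H K : Type*}

open MeasureTheory Complex

section CrossingAux
open Filter

-- basic strip facts
theorem crossing_strip_isOpen : IsOpen {z : ℂ | 0 < z.im ∧ z.im < Real.pi} :=
  (isOpen_lt continuous_const Complex.continuous_im).inter
    (isOpen_lt Complex.continuous_im continuous_const)

theorem crossing_sigma_mem_open {z : ℂ} (hz : z ∈ {z : ℂ | 0 < z.im ∧ z.im < Real.pi}) :
    (starRingEnd ℂ) z + Real.pi * I ∈ {z : ℂ | 0 < z.im ∧ z.im < Real.pi} := by
  have : ((starRingEnd ℂ) z + Real.pi * I).im = Real.pi - z.im := by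
    simp [Complex.add_im, Complex.conj_im]; ring
  obtain ⟨h1, h2⟩ := hz
  constructor <;> simp only [Set.mem_setOf_eq, this] <;> linarith

theorem crossing_sigma_mem_closed {z : ℂ} (hz : z ∈ {z : ℂ | 0 ≤ z.im ∧ z.im ≤ Real.pi}) :
    (starRingEnd ℂ) z + Real.pi * I ∈ {z : ℂ | 0 ≤ z.im ∧ z.im ≤ Real.pi} := by
  have : ((starRingEnd ℂ) z + Real.pi * I).im = Real.pi - z.im := by
    simp [Complex.add_im, Complex.conj_im]; ring
  obtain ⟨h1, h2⟩ := hz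
  constructor <;> simp only [Set.mem_setOf_eq, this] <;> linarith

theorem crossing_sub_mem_open {z : ℂ} (s : ℝ)
    (hz : z ∈ {z : ℂ | 0 < z.im ∧ z.im < Real.pi}) :
    z - (s:ℂ) ∈ {z : ℂ | 0 < z.im ∧ z.im < Real.pi} := by
  obtain ⟨h1, h2⟩ := hz
  constructor <;> simp only [Set.mem_setOf_eq, Complex.sub_im, Complex.ofReal_im, sub_zero] <;>
    assumption

theorem crossing_sub_mem_closed {z : ℂ} (s : ℝ)
    (hz : z ∈ {z : ℂ | 0 ≤ z.im ∧ z.im ≤ Real.pi}) :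
    z - (s:ℂ) ∈ {z : ℂ | 0 ≤ z.im ∧ z.im ≤ Real.pi} := by
  obtain ⟨h1, h2⟩ := hz
  constructor <;> simp only [Set.mem_setOf_eq, Complex.sub_im, Complex.ofReal_im, sub_zero] <;>
    assumption

theorem crossing_real_mem_closed (θ : ℝ) :
    (θ:ℂ) ∈ {z : ℂ | 0 ≤ z.im ∧ z.im ≤ Real.pi} := by
  constructor <;> simp [Real.pi_pos.le]

theorem crossing_line_mem_closed (θ t : ℝ) (ht : t ∈ Set.Icc (0:ℝ) Real.pi) :
    (θ:ℂ) + (t:ℂ) * I ∈ {z : ℂ | 0 ≤ z.im ∧ z.im ≤ Real.pi} := by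
  constructor <;> simp [ht.1, ht.2]

theorem crossing_hasDerivAt_conj_comp {F : ℂ → ℂ} {d : ℂ} (ζ : ℂ)
    (hF : HasDerivAt F d ((starRingEnd ℂ) ζ + Real.pi * I)) :
    HasDerivAt (fun z => (starRingEnd ℂ) (F ((starRingEnd ℂ) z + Real.pi * I)))
      ((starRingEnd ℂ) d) ζ := by
  set σ : ℂ → ℂ := fun z => (starRingEnd ℂ) z + Real.pi * I with hσdef
  set w : ℂ := σ ζ with hw
  have hσ : Tendsto σ (nhds ζ) (nhds w) :=
    ((continuous_conj.add continuous_const).tendsto ζ)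
  have h0 := (hasDerivAt_iff_tendsto.mp hF).comp hσ
  rw [hasDerivAt_iff_tendsto]
  refine Tendsto.congr (fun z => ?_) h0
  have h1 : σ z - w = (starRingEnd ℂ) (z - ζ) := by
    simp only [hσdef, map_sub]; ring
  have h2 : ‖σ z - w‖ = ‖z - ζ‖ := by rw [h1, RCLike.norm_conj]
  have h3 : (starRingEnd ℂ) (F (σ z)) - (starRingEnd ℂ) (F w)
          - (z - ζ) • (starRingEnd ℂ) d
      = (starRingEnd ℂ) (F (σ z) - F w - (σ z - w) • d) := by
    rw [h1]
    simp only [map_sub, map_mul, smul_eq_mul, Complex.conj_conj]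
  show ‖σ z - w‖⁻¹ * ‖F (σ z) - F w - (σ z - w) • d‖ = _
  rw [h2, h3, RCLike.norm_conj]

-- the analytic-continuation function for the pair (h_s, g_s)
theorem crossing_G_props (m X : ℂ → ℂ) (s : ℝ) (Mu Mx : ℝ)
    (hma : DifferentiableOn ℂ m {z : ℂ | 0 < z.im ∧ z.im < Real.pi})
    (hmc : ContinuousOn m {z : ℂ | 0 ≤ z.im ∧ z.im ≤ Real.pi})
    (hm_up : ∀ z ∈ {z : ℂ | 0 ≤ z.im ∧ z.im ≤ Real.pi}, ‖m z‖ ≤ Mu)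
    (hm_lo : ∀ z ∈ {z : ℂ | 0 ≤ z.im ∧ z.im ≤ Real.pi}, 1 ≤ ‖m z‖)
    (hmbc : ∀ θ : ℝ, (starRingEnd ℂ) (m ((θ:ℂ) + Real.pi * I)) = m (θ:ℂ))
    (hXa : DifferentiableOn ℂ X {z : ℂ | 0 < z.im ∧ z.im < Real.pi})
    (hXc : ContinuousOn X {z : ℂ | 0 ≤ z.im ∧ z.im ≤ Real.pi})
    (hXb : ∀ t ∈ Set.Icc (0 : ℝ) Real.pi, (∫ θ : ℝ, ‖X ((θ : ℂ) + t * I)‖ ^ 2) ≤ Mx) :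
    DifferentiableOn ℂ
        (fun z => (starRingEnd ℂ)
          (m (((starRingEnd ℂ) z + Real.pi * I) - s) * X ((starRingEnd ℂ) z + Real.pi * I)))
        {z : ℂ | 0 < z.im ∧ z.im < Real.pi} ∧
      ContinuousOn
        (fun z => (starRingEnd ℂ)
          (m (((starRingEnd ℂ) z + Real.pi * I) - s) * X ((starRingEnd ℂ) z + Real.pi * I)))
        {z : ℂ | 0 ≤ z.im ∧ z.im ≤ Real.pi} ∧
      (∃ M : ℝ, ∀ t ∈ Set.Icc (0 : ℝ) Real.pi,
        (∫ θ : ℝ, ‖(starRingEnd ℂ)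
            (m (((starRingEnd ℂ) ((θ:ℂ) + t * I) + Real.pi * I) - s)
              * X ((starRingEnd ℂ) ((θ:ℂ) + t * I) + Real.pi * I))‖ ^ 2) ≤ M) ∧
      (∀ θ : ℝ, (starRingEnd ℂ)
          (m (((starRingEnd ℂ) ((θ:ℂ)) + Real.pi * I) - s) * X ((starRingEnd ℂ) ((θ:ℂ)) + Real.pi * I))
          = m ((θ:ℂ) - s) * (starRingEnd ℂ) (X ((θ:ℂ) + Real.pi * I))) ∧
      (∀ θ : ℝ, (starRingEnd ℂ) ((starRingEnd ℂ)
          (m (((starRingEnd ℂ) ((θ:ℂ) + Real.pi * I) + Real.pi * I) - s)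
            * X ((starRingEnd ℂ) ((θ:ℂ) + Real.pi * I) + Real.pi * I)))
          = m ((θ:ℂ) - s) * X (θ:ℂ)) := by
  constructor
  · -- differentiability
    intro ζ hζ
    have hw : (starRingEnd ℂ) ζ + Real.pi * I ∈ {z : ℂ | 0 < z.im ∧ z.im < Real.pi} :=
      crossing_sigma_mem_open hζ
    have h1 : DifferentiableAt ℂ X ((starRingEnd ℂ) ζ + Real.pi * I) :=
      hXa.differentiableAt (crossing_strip_isOpen.mem_nhds hw)
    have h2 : DifferentiableAt ℂ (fun w => m (w - (s:ℂ)))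
        ((starRingEnd ℂ) ζ + Real.pi * I) :=
      DifferentiableAt.comp ((starRingEnd ℂ) ζ + Real.pi * I)
        (hma.differentiableAt
          (crossing_strip_isOpen.mem_nhds (crossing_sub_mem_open s hw)))
        (differentiableAt_id.sub_const (s:ℂ))
    have h3 : HasDerivAt (fun w => m (w - (s:ℂ)) * X w)
        (deriv (fun w => m (w - (s:ℂ)) * X w) ((starRingEnd ℂ) ζ + Real.pi * I))
        ((starRingEnd ℂ) ζ + Real.pi * I) := (h2.mul h1).hasDerivAt
    exact (crossing_hasDerivAt_conj_comp ζ h3).differentiableAt.differentiableWithinAt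
  constructor
  · -- continuity
    have hσc : Continuous (fun z : ℂ => (starRingEnd ℂ) z + Real.pi * I) :=
      continuous_conj.add continuous_const
    have hFc : ContinuousOn (fun w => m (w - (s:ℂ)) * X w)
        {z : ℂ | 0 ≤ z.im ∧ z.im ≤ Real.pi} :=
      (hmc.comp ((continuous_id.sub continuous_const).continuousOn)
        (fun w hw => crossing_sub_mem_closed s hw)).mul hXc
    exact continuous_conj.comp_continuousOn
      (hFc.comp hσc.continuousOn (fun z hz => crossing_sigma_mem_closed hz))
  constructor
  · -- uniform L² bound
    refine ⟨max 0 (Mu ^ 2 * Mx), fun t ht => ?_⟩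
    have hrw : ∀ θ : ℝ, (starRingEnd ℂ) ((θ:ℂ) + (t:ℂ) * I) + Real.pi * I
        = (θ:ℂ) + ((Real.pi - t : ℝ):ℂ) * I := by
      intro θ
      push_cast
      simp only [map_add, map_mul, Complex.conj_ofReal, Complex.conj_I]
      ring
    have huIcc : Real.pi - t ∈ Set.Icc (0:ℝ) Real.pi := ⟨by linarith [ht.2], by linarith [ht.1]⟩
    have hlinec : Continuous (fun θ : ℝ => (θ:ℂ) + ((Real.pi - t : ℝ):ℂ) * I) :=
      Complex.continuous_ofReal.add continuous_const
    have hlinemem : ∀ θ : ℝ, (θ:ℂ) + ((Real.pi - t : ℝ):ℂ) * I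
        ∈ {z : ℂ | 0 ≤ z.im ∧ z.im ≤ Real.pi} :=
      fun θ => crossing_line_mem_closed θ _ huIcc
    have hXcont : Continuous (fun θ : ℝ => X ((θ:ℂ) + ((Real.pi - t : ℝ):ℂ) * I)) :=
      hXc.comp_continuous hlinec hlinemem
    have hmmem : ∀ θ : ℝ, (θ:ℂ) + ((Real.pi - t : ℝ):ℂ) * I - (s:ℂ)
        ∈ {z : ℂ | 0 ≤ z.im ∧ z.im ≤ Real.pi} :=
      fun θ => crossing_sub_mem_closed s (hlinemem θ)
    have hmcont : Continuous (fun θ : ℝ => m ((θ:ℂ) + ((Real.pi - t : ℝ):ℂ) * I - (s:ℂ))) :=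
      hmc.comp_continuous (hlinec.sub continuous_const) hmmem
    have hXscont : Continuous (fun θ : ℝ => ‖X ((θ:ℂ) + ((Real.pi - t : ℝ):ℂ) * I)‖ ^ 2) :=
      (hXcont.norm).pow 2
    calc (∫ θ : ℝ, ‖(starRingEnd ℂ)
            (m (((starRingEnd ℂ) ((θ:ℂ) + t * I) + Real.pi * I) - s)
              * X ((starRingEnd ℂ) ((θ:ℂ) + t * I) + Real.pi * I))‖ ^ 2)
        = ∫ θ : ℝ, ‖m ((θ:ℂ) + ((Real.pi - t : ℝ):ℂ) * I - (s:ℂ))‖ ^ 2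
            * ‖X ((θ:ℂ) + ((Real.pi - t : ℝ):ℂ) * I)‖ ^ 2 := by
          congr 1
          funext θ
          rw [hrw θ, RCLike.norm_conj, norm_mul, mul_pow]
      _ ≤ max 0 (Mu ^ 2 * Mx) := by
          by_cases hXint :
            Integrable (fun θ : ℝ => ‖X ((θ:ℂ) + ((Real.pi - t : ℝ):ℂ) * I)‖ ^ 2) volume
          · have hb : ∀ θ : ℝ, ‖m ((θ:ℂ) + ((Real.pi - t : ℝ):ℂ) * I - (s:ℂ))‖ ^ 2
                * ‖X ((θ:ℂ) + ((Real.pi - t : ℝ):ℂ) * I)‖ ^ 2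
                ≤ Mu ^ 2 * ‖X ((θ:ℂ) + ((Real.pi - t : ℝ):ℂ) * I)‖ ^ 2 := by
              intro θ
              have h1 := hm_up _ (hmmem θ)
              have h2 := norm_nonneg (m ((θ:ℂ) + ((Real.pi - t : ℝ):ℂ) * I - (s:ℂ)))
              have h3 := norm_nonneg (X ((θ:ℂ) + ((Real.pi - t : ℝ):ℂ) * I))
              exact mul_le_mul_of_nonneg_right (pow_le_pow_left₀ h2 h1 2) (by positivity)
            refine le_trans ?_ (le_max_right _ _)
            calc (∫ θ : ℝ, ‖m ((θ:ℂ) + ((Real.pi - t : ℝ):ℂ) * I - (s:ℂ))‖ ^ 2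
                  * ‖X ((θ:ℂ) + ((Real.pi - t : ℝ):ℂ) * I)‖ ^ 2)
                ≤ ∫ θ : ℝ, Mu ^ 2 * ‖X ((θ:ℂ) + ((Real.pi - t : ℝ):ℂ) * I)‖ ^ 2 :=
                  integral_mono_of_nonneg
                    (Filter.Eventually.of_forall fun θ => by positivity)
                    (hXint.const_mul _)
                    (Filter.Eventually.of_forall hb)
              _ = Mu ^ 2 * ∫ θ : ℝ, ‖X ((θ:ℂ) + ((Real.pi - t : ℝ):ℂ) * I)‖ ^ 2 :=
                  integral_const_mul _ _
              _ ≤ Mu ^ 2 * Mx :=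
                  mul_le_mul_of_nonneg_left (hXb _ huIcc) (by positivity)
          · have hGint : ¬ Integrable (fun θ : ℝ =>
                ‖m ((θ:ℂ) + ((Real.pi - t : ℝ):ℂ) * I - (s:ℂ))‖ ^ 2
                  * ‖X ((θ:ℂ) + ((Real.pi - t : ℝ):ℂ) * I)‖ ^ 2) volume := by
              intro h
              refine hXint (h.mono' hXscont.aestronglyMeasurable
                (Filter.Eventually.of_forall fun θ => ?_))
              rw [Real.norm_of_nonneg (by positivity)]
              have h1 := hm_lo _ (hmmem θ)
              have h2 : (1:ℝ) ≤ ‖m ((θ:ℂ) + ((Real.pi - t : ℝ):ℂ) * I - (s:ℂ))‖ ^ 2 := by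
                nlinarith
              exact le_mul_of_one_le_left (by positivity) h2
            rw [integral_undef hGint]
            exact le_max_left _ _
  constructor
  · -- boundary value at Im = 0
    intro θ
    have h0 : (starRingEnd ℂ) ((θ:ℂ)) + Real.pi * I = (θ:ℂ) + Real.pi * I := by
      rw [Complex.conj_ofReal]
    have h1 : (θ:ℂ) + Real.pi * I - (s:ℂ) = ((θ - s : ℝ):ℂ) + Real.pi * I := by
      push_cast; ring
    rw [h0, map_mul, h1, hmbc (θ - s)]
    congr 2
    push_cast; ring
  · -- boundary value at Im = π
    intro θ
    have h0 : (starRingEnd ℂ) ((θ:ℂ) + Real.pi * I) + Real.pi * I = (θ:ℂ) := by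
      simp only [map_add, map_mul, Complex.conj_ofReal, Complex.conj_I]
      ring
    rw [Complex.conj_conj, h0]



theorem crossing_key
    (S : AntiInvolution (Lp ℂ 2 (volume : Measure ℝ)))
    (hSgraph : ∀ ψ χ : Lp ℂ 2 (volume : Measure ℝ),
      (ψ ∈ S.dom ∧ S.toFun ψ = χ) ↔
        ∃ Ψ : ℂ → ℂ,
          DifferentiableOn ℂ Ψ {z : ℂ | 0 < z.im ∧ z.im < Real.pi} ∧
          ContinuousOn Ψ {z : ℂ | 0 ≤ z.im ∧ z.im ≤ Real.pi} ∧
          (∃ M : ℝ, ∀ t ∈ Set.Icc (0 : ℝ) Real.pi,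
            (∫ θ : ℝ, ‖Ψ ((θ : ℂ) + t * I)‖ ^ 2) ≤ M) ∧
          (ψ : ℝ → ℂ) =ᵐ[volume] (fun θ : ℝ => Ψ (θ : ℂ)) ∧
          (χ : ℝ → ℂ) =ᵐ[volume] (fun θ : ℝ => conj (Ψ ((θ : ℂ) + Real.pi * I))))
    (φ : ℂ → ℂ)
    (hφa : DifferentiableOn ℂ φ {z : ℂ | 0 < z.im ∧ z.im < Real.pi})
    (hφc : ContinuousOn φ {z : ℂ | 0 ≤ z.im ∧ z.im ≤ Real.pi})
    (hφb : ∃ M : ℝ, ∀ z ∈ {z : ℂ | 0 ≤ z.im ∧ z.im ≤ Real.pi}, ‖φ z‖ ≤ M)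
    (hφbc : ∀ θ : ℝ, φ ((θ : ℂ) + Real.pi * I) = conj (φ (θ : ℂ)))
    (x : Lp ℂ 2 (volume : Measure ℝ)) (hx : x ∈ S.dom)
    (ψ₂ : Lp ℂ 2 (volume : Measure ℝ)) (hψ₂ : ψ₂ ∈ S.adjDom) (s : ℝ) :
    ∫ θ : ℝ, conj (φ ((θ:ℂ) - (s:ℂ))) * (conj ((x : ℝ → ℂ) θ) * (ψ₂ : ℝ → ℂ) θ)
      = ∫ θ : ℝ, conj ((S.adjFun ψ₂ : ℝ → ℂ) θ)
          * (φ ((θ:ℂ) - (s:ℂ)) * (S.toFun x : ℝ → ℂ) θ) := by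
    classical
  -- bound data for φ
  obtain ⟨Mφ₀, hMφ₀⟩ := hφb
  set Mφ : ℝ := max Mφ₀ 0 with hMφdef
  have hMφ : ∀ z ∈ {z : ℂ | 0 ≤ z.im ∧ z.im ≤ Real.pi}, ‖φ z‖ ≤ Mφ :=
    fun z hz => le_trans (hMφ₀ z hz) (le_max_left _ _)
  have hMφ0 : 0 ≤ Mφ := le_max_right _ _
  set c : ℝ := Mφ + 1 with hcdef
  have hc0 : 0 ≤ c := by simp only [hcdef]; linarith
  have hnc : ‖(c:ℂ)‖ = c := by
    rw [Complex.norm_real, Real.norm_of_nonneg hc0]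
  set m : ℂ → ℂ := fun z => φ z + (c:ℂ) with hmdef
  have hm_up : ∀ z ∈ {z : ℂ | 0 ≤ z.im ∧ z.im ≤ Real.pi}, ‖m z‖ ≤ 2 * Mφ + 1 := by
    intro z hz
    calc ‖φ z + (c:ℂ)‖ ≤ ‖φ z‖ + ‖(c:ℂ)‖ := norm_add_le _ _
      _ ≤ 2 * Mφ + 1 := by
          have := hMφ z hz
          rw [hnc]
          simp only [hcdef]; linarith
  have hm_lo : ∀ z ∈ {z : ℂ | 0 ≤ z.im ∧ z.im ≤ Real.pi}, 1 ≤ ‖m z‖ := by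
    intro z hz
    have h1 : ‖(c:ℂ)‖ ≤ ‖φ z + (c:ℂ)‖ + ‖φ z‖ := by
      calc ‖(c:ℂ)‖ = ‖φ z + (c:ℂ) - φ z‖ := by congr 1; ring
        _ ≤ ‖φ z + (c:ℂ)‖ + ‖φ z‖ := norm_sub_le _ _
    have h2 := hMφ z hz
    rw [hnc] at h1
    simp only [hmdef]
    simp only [hcdef] at h1
    linarith
  have hma : DifferentiableOn ℂ m {z : ℂ | 0 < z.im ∧ z.im < Real.pi} := by
    exact hφa.add_const _
  have hmc : ContinuousOn m {z : ℂ | 0 ≤ z.im ∧ z.im ≤ Real.pi} := by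
    exact hφc.add continuousOn_const
  have hmbc : ∀ θ : ℝ, (starRingEnd ℂ) (m ((θ:ℂ) + Real.pi * I)) = m (θ:ℂ) := by
    intro θ
    simp only [hmdef, map_add, hφbc θ, Complex.conj_conj, Complex.conj_ofReal]
  -- analytic extension of x
  obtain ⟨X, hXa, hXc, ⟨Mx, hXb⟩, hX0, hXpi⟩ := (hSgraph x (S.toFun x)).mp ⟨hx, rfl⟩
  obtain ⟨Gdiff, Gcont, Gbound, Gbd0, Gbdpi⟩ :=
    crossing_G_props m X s (2 * Mφ + 1) Mx hma hmc hm_up hm_lo hmbc hXa hXc hXb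
  -- the two Lp elements h_s and g_s
  have hmlinec : Continuous (fun θ : ℝ => m ((θ:ℂ) - (s:ℂ))) :=
    hmc.comp_continuous (Complex.continuous_ofReal.sub continuous_const)
      (fun θ => crossing_sub_mem_closed s (crossing_real_mem_closed θ))
  have hmline_up : ∀ θ : ℝ, ‖m ((θ:ℂ) - (s:ℂ))‖ ≤ 2 * Mφ + 1 :=
    fun θ => hm_up _ (crossing_sub_mem_closed s (crossing_real_mem_closed θ))
  have hgmem : MemLp (fun θ : ℝ => m ((θ:ℂ) - (s:ℂ)) * (x : ℝ → ℂ) θ) 2 volume :=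
    MemLp.of_le_mul (Lp.memLp x)
      (hmlinec.aestronglyMeasurable.mul (Lp.aestronglyMeasurable x))
      (Filter.Eventually.of_forall fun θ => by
        rw [norm_mul]
        exact mul_le_mul_of_nonneg_right (hmline_up θ) (norm_nonneg _))
  have hhmem : MemLp (fun θ : ℝ => m ((θ:ℂ) - (s:ℂ)) * (S.toFun x : ℝ → ℂ) θ) 2 volume :=
    MemLp.of_le_mul (Lp.memLp (S.toFun x))
      (hmlinec.aestronglyMeasurable.mul (Lp.aestronglyMeasurable (S.toFun x)))
      (Filter.Eventually.of_forall fun θ => by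
        rw [norm_mul]
        exact mul_le_mul_of_nonneg_right (hmline_up θ) (norm_nonneg _))
  set gs : Lp ℂ 2 (volume : Measure ℝ) := hgmem.toLp _ with hgsdef
  set hs : Lp ℂ 2 (volume : Measure ℝ) := hhmem.toLp _ with hhsdef
  -- (h_s, g_s) belongs to the graph of S
  have hpair : hs ∈ S.dom ∧ S.toFun hs = gs := by
    refine (hSgraph hs gs).mpr
      ⟨fun z => (starRingEnd ℂ)
          (m (((starRingEnd ℂ) z + Real.pi * I) - s) * X ((starRingEnd ℂ) z + Real.pi * I)),
        Gdiff, Gcont, Gbound, ?_, ?_⟩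
    · filter_upwards [hhmem.coeFn_toLp, hXpi] with θ h1 h2
      rw [← hhsdef] at h1
      rw [h1, Gbd0 θ, h2]
    · filter_upwards [hgmem.coeFn_toLp, hX0] with θ h1 h2
      rw [← hgsdef] at h1
      rw [h1, Gbdpi θ, h2]
  -- inner products as integrals
  have hinner : ∀ f g : Lp ℂ 2 (volume : Measure ℝ),
      ⟪f, g⟫_ℂ = ∫ θ : ℝ, conj ((f : ℝ → ℂ) θ) * (g : ℝ → ℂ) θ := by
    intro f g
    rw [MeasureTheory.L2.inner_def]
    simp_rw [RCLike.inner_apply]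
    exact integral_congr_ae (Filter.Eventually.of_forall fun θ => mul_comm _ _)
  -- main identity from the adjoint relation
  have E1 : ∫ θ : ℝ, conj ((S.adjFun ψ₂ : ℝ → ℂ) θ) * (hs : ℝ → ℂ) θ
      = ∫ θ : ℝ, conj ((gs : ℝ → ℂ) θ) * (ψ₂ : ℝ → ℂ) θ := by
    rw [← hinner, ← hinner, S.adj_spec ψ₂ hψ₂ hs hpair.1, hpair.2]
  -- secondary identity from the adjoint relation
  have E2 : ∫ θ : ℝ, conj ((S.adjFun ψ₂ : ℝ → ℂ) θ) * (S.toFun x : ℝ → ℂ) θ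
      = ∫ θ : ℝ, conj ((x : ℝ → ℂ) θ) * (ψ₂ : ℝ → ℂ) θ := by
    rw [← hinner, ← hinner, S.adj_spec ψ₂ hψ₂ (S.toFun x) (S.invol_mem x hx), S.invol x hx]
  -- replace Lp representatives in E1
  have E1' : ∫ θ : ℝ, conj ((S.adjFun ψ₂ : ℝ → ℂ) θ)
        * (m ((θ:ℂ) - (s:ℂ)) * (S.toFun x : ℝ → ℂ) θ)
      = ∫ θ : ℝ, conj (m ((θ:ℂ) - (s:ℂ)) * (x : ℝ → ℂ) θ) * (ψ₂ : ℝ → ℂ) θ := by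
    have hL : (∫ θ : ℝ, conj ((S.adjFun ψ₂ : ℝ → ℂ) θ) * (hs : ℝ → ℂ) θ)
        = ∫ θ : ℝ, conj ((S.adjFun ψ₂ : ℝ → ℂ) θ)
            * (m ((θ:ℂ) - (s:ℂ)) * (S.toFun x : ℝ → ℂ) θ) := by
      refine integral_congr_ae ?_
      filter_upwards [hhmem.coeFn_toLp] with θ h
      rw [h]
    have hR : (∫ θ : ℝ, conj ((gs : ℝ → ℂ) θ) * (ψ₂ : ℝ → ℂ) θ)
        = ∫ θ : ℝ, conj (m ((θ:ℂ) - (s:ℂ)) * (x : ℝ → ℂ) θ) * (ψ₂ : ℝ → ℂ) θ := by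
      refine integral_congr_ae ?_
      filter_upwards [hgmem.coeFn_toLp] with θ h
      rw [h]
    exact (hL.symm.trans E1).trans hR
  -- integrability facts
  have hφlinec : Continuous (fun θ : ℝ => φ ((θ:ℂ) - (s:ℂ))) :=
    hφc.comp_continuous (Complex.continuous_ofReal.sub continuous_const)
      (fun θ => crossing_sub_mem_closed s (crossing_real_mem_closed θ))
  have hφline_up : ∀ θ : ℝ, ‖φ ((θ:ℂ) - (s:ℂ))‖ ≤ Mφ :=
    fun θ => hMφ _ (crossing_sub_mem_closed s (crossing_real_mem_closed θ))
  have hI1 : Integrable (fun θ : ℝ => conj ((x : ℝ → ℂ) θ) * (ψ₂ : ℝ → ℂ) θ) volume := by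
    have := MeasureTheory.L2.integrable_inner (𝕜 := ℂ) x ψ₂
    simpa [RCLike.inner_apply, mul_comm] using this
  have hI3 : Integrable (fun θ : ℝ => conj ((S.adjFun ψ₂ : ℝ → ℂ) θ)
      * (S.toFun x : ℝ → ℂ) θ) volume := by
    have := MeasureTheory.L2.integrable_inner (𝕜 := ℂ) (S.adjFun ψ₂) (S.toFun x)
    simpa [RCLike.inner_apply, mul_comm] using this
  have hI2 : Integrable (fun θ : ℝ => conj (φ ((θ:ℂ) - (s:ℂ)))
      * (conj ((x : ℝ → ℂ) θ) * (ψ₂ : ℝ → ℂ) θ)) volume :=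
    hI1.bdd_mul (continuous_conj.comp hφlinec).aestronglyMeasurable
      (Filter.Eventually.of_forall fun θ => by
        simpa only [Function.comp_apply, RCLike.norm_conj] using hφline_up θ)
  have hI4 : Integrable (fun θ : ℝ => φ ((θ:ℂ) - (s:ℂ))
      * (conj ((S.adjFun ψ₂ : ℝ → ℂ) θ) * (S.toFun x : ℝ → ℂ) θ)) volume :=
    hI3.bdd_mul hφlinec.aestronglyMeasurable (Filter.Eventually.of_forall hφline_up)
  -- split off the constant part
  have hsplitL : (∫ θ : ℝ, conj ((S.adjFun ψ₂ : ℝ → ℂ) θ)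
        * (m ((θ:ℂ) - (s:ℂ)) * (S.toFun x : ℝ → ℂ) θ))
      = (∫ θ : ℝ, φ ((θ:ℂ) - (s:ℂ))
          * (conj ((S.adjFun ψ₂ : ℝ → ℂ) θ) * (S.toFun x : ℝ → ℂ) θ))
        + (c:ℂ) * ∫ θ : ℝ, conj ((S.adjFun ψ₂ : ℝ → ℂ) θ) * (S.toFun x : ℝ → ℂ) θ := by
    rw [← integral_const_mul, ← integral_add hI4 ((hI3.const_mul (c:ℂ)))]
    congr 1
    funext θ
    simp only [hmdef]
    ring
  have hsplitR : (∫ θ : ℝ, conj (m ((θ:ℂ) - (s:ℂ)) * (x : ℝ → ℂ) θ) * (ψ₂ : ℝ → ℂ) θ)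
      = (∫ θ : ℝ, conj (φ ((θ:ℂ) - (s:ℂ))) * (conj ((x : ℝ → ℂ) θ) * (ψ₂ : ℝ → ℂ) θ))
        + (c:ℂ) * ∫ θ : ℝ, conj ((x : ℝ → ℂ) θ) * (ψ₂ : ℝ → ℂ) θ := by
    rw [← integral_const_mul, ← integral_add hI2 ((hI1.const_mul (c:ℂ)))]
    congr 1
    funext θ
    simp only [hmdef, map_add, map_mul, Complex.conj_ofReal]
    ring
  rw [hsplitL, hsplitR, E2] at E1'
  have hgoalL : (∫ θ : ℝ, conj ((S.adjFun ψ₂ : ℝ → ℂ) θ)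
        * (φ ((θ:ℂ) - (s:ℂ)) * (S.toFun x : ℝ → ℂ) θ))
      = ∫ θ : ℝ, φ ((θ:ℂ) - (s:ℂ))
          * (conj ((S.adjFun ψ₂ : ℝ → ℂ) θ) * (S.toFun x : ℝ → ℂ) θ) := by
    congr 1
    funext θ
    ring
  rw [hgoalL]
  exact (add_right_cancel E1').symm

end CrossingAux


/-- On `𝓗 = L²(ℝ)`, let `S_H` be the Tomita operator of the standard
subspace with modular data `(J_H ψ)(θ) = conj ψ(θ)`, `(Δ_H^{it}ψ)(θ) = ψ(θ − 2πt)`; its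
graph is characterized by analytic continuation to the strip `0 < Im ζ < π` in the Hardy
class, with `(S_H ψ)(θ) = conj Ψ(θ + iπ)`. For `φ ∈ H^∞(𝕊_π)` with boundary values
satisfying `φ(θ + iπ) = conj φ(θ)`, the operator `(T_φ Ψ)(θ₁,θ₂) = φ(θ₂−θ₁)Ψ(θ₂,θ₁)` is
`S_H`-crossing symmetric. -/
theorem Tphi_crossing_symmetric
    (S : AntiInvolution (Lp ℂ 2 (volume : Measure ℝ)))
    (hSgraph : ∀ ψ χ : Lp ℂ 2 (volume : Measure ℝ),
      (ψ ∈ S.dom ∧ S.toFun ψ = χ) ↔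
        ∃ Ψ : ℂ → ℂ,
          DifferentiableOn ℂ Ψ {z : ℂ | 0 < z.im ∧ z.im < Real.pi} ∧
          ContinuousOn Ψ {z : ℂ | 0 ≤ z.im ∧ z.im ≤ Real.pi} ∧
          (∃ M : ℝ, ∀ t ∈ Set.Icc (0 : ℝ) Real.pi,
            (∫ θ : ℝ, ‖Ψ ((θ : ℂ) + t * I)‖ ^ 2) ≤ M) ∧
          (ψ : ℝ → ℂ) =ᵐ[volume] (fun θ : ℝ => Ψ (θ : ℂ)) ∧
          (χ : ℝ → ℂ) =ᵐ[volume] (fun θ : ℝ => conj (Ψ ((θ : ℂ) + Real.pi * I))))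
    (τ : TensorSquare (Lp ℂ 2 (volume : Measure ℝ)) (Lp ℂ 2 (volume : Measure (ℝ × ℝ))))
    (hτ : ∀ f g : Lp ℂ 2 (volume : Measure ℝ),
      (τ.tmul f g : ℝ × ℝ → ℂ) =ᵐ[volume] fun p => f p.1 * g p.2)
    (φ : ℂ → ℂ)
    (hφa : DifferentiableOn ℂ φ {z : ℂ | 0 < z.im ∧ z.im < Real.pi})
    (hφc : ContinuousOn φ {z : ℂ | 0 ≤ z.im ∧ z.im ≤ Real.pi})
    (hφb : ∃ M : ℝ, ∀ z ∈ {z : ℂ | 0 ≤ z.im ∧ z.im ≤ Real.pi}, ‖φ z‖ ≤ M)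
    (hφbc : ∀ θ : ℝ, φ ((θ : ℂ) + Real.pi * I) = conj (φ (θ : ℂ)))
    (Tφ : Lp ℂ 2 (volume : Measure (ℝ × ℝ)) →L[ℂ] Lp ℂ 2 (volume : Measure (ℝ × ℝ)))
    (hTφ : ∀ Ψ : Lp ℂ 2 (volume : Measure (ℝ × ℝ)),
      (Tφ Ψ : ℝ × ℝ → ℂ) =ᵐ[volume]
        fun p => φ ((p.2 : ℂ) - (p.1 : ℂ)) * Ψ (p.2, p.1)) :
    CrossRelU τ S Tφ (ContinuousLinearMap.adjoint Tφ) := by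
  intro φ₁ hφ₁ ψ₁ hψ₁ φ₂ hφ₂ ψ₂ hψ₂
  classical
  have hvol : (volume : Measure (ℝ × ℝ)) = (volume : Measure ℝ).prod volume :=
    MeasureTheory.Measure.volume_eq_prod ℝ ℝ
  obtain ⟨Mφ₀, hMφ₀⟩ := hφb
  have hmemsub : ∀ a b : ℝ, ((a:ℂ) - (b:ℂ)) ∈ {z : ℂ | 0 ≤ z.im ∧ z.im ≤ Real.pi} :=
    fun a b => crossing_sub_mem_closed b (crossing_real_mem_closed a)
  have hinnerK : ∀ F G : Lp ℂ 2 (volume : Measure (ℝ × ℝ)),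
      ⟪F, G⟫_ℂ = ∫ p : ℝ × ℝ, conj ((F : ℝ × ℝ → ℂ) p) * (G : ℝ × ℝ → ℂ) p := by
    intro F G
    rw [MeasureTheory.L2.inner_def]
    simp_rw [RCLike.inner_apply]
    exact integral_congr_ae (Filter.Eventually.of_forall fun p => mul_comm _ _)
  -- swap transfer
  have hQswap : Measure.QuasiMeasurePreserving (Prod.swap : ℝ × ℝ → ℝ × ℝ)
      (volume : Measure (ℝ × ℝ)) (volume : Measure (ℝ × ℝ)) := by
    rw [hvol]
    exact Measure.measurePreserving_swap.quasiMeasurePreserving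
  have hswap : ∀ (u : Lp ℂ 2 (volume : Measure (ℝ × ℝ))) (f g : Lp ℂ 2 (volume : Measure ℝ)),
      (u : ℝ × ℝ → ℂ) =ᵐ[volume] (fun p => (f : ℝ → ℂ) p.1 * (g : ℝ → ℂ) p.2) →
      (fun p : ℝ × ℝ => (u : ℝ × ℝ → ℂ) (p.2, p.1))
        =ᵐ[volume] fun p => (f : ℝ → ℂ) p.2 * (g : ℝ → ℂ) p.1 := by
    intro u f g h
    have := hQswap.ae_eq_comp h
    exact this
  -- continuity/measurability of the symbol on the reals
  have hφprodc : Continuous (fun p : ℝ × ℝ => φ ((p.2:ℂ) - (p.1:ℂ))) :=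
    hφc.comp_continuous
      ((Complex.continuous_ofReal.comp continuous_snd).sub
        (Complex.continuous_ofReal.comp continuous_fst))
      (fun p => hmemsub p.2 p.1)
  -- L¹ building blocks
  have hk : Integrable (fun s : ℝ => conj ((φ₂ : ℝ → ℂ) s) * (ψ₁ : ℝ → ℂ) s) volume := by
    have := MeasureTheory.L2.integrable_inner (𝕜 := ℂ) φ₂ ψ₁
    simpa [RCLike.inner_apply, mul_comm] using this
  have hl : Integrable (fun θ : ℝ => conj ((φ₁ : ℝ → ℂ) θ) * (ψ₂ : ℝ → ℂ) θ) volume := by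
    have := MeasureTheory.L2.integrable_inner (𝕜 := ℂ) φ₁ ψ₂
    simpa [RCLike.inner_apply, mul_comm] using this
  have hl' : Integrable (fun θ : ℝ => conj ((S.adjFun ψ₂ : ℝ → ℂ) θ)
      * (S.toFun φ₁ : ℝ → ℂ) θ) volume := by
    have := MeasureTheory.L2.integrable_inner (𝕜 := ℂ) (S.adjFun ψ₂) (S.toFun φ₁)
    simpa [RCLike.inner_apply, mul_comm] using this
  -- the two canonical integrands
  set Fc : ℝ × ℝ → ℂ := fun p => conj (φ ((p.2:ℂ) - (p.1:ℂ)))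
    * ((conj ((φ₂ : ℝ → ℂ) p.1) * (ψ₁ : ℝ → ℂ) p.1)
      * (conj ((φ₁ : ℝ → ℂ) p.2) * (ψ₂ : ℝ → ℂ) p.2)) with hFcdef
  set Gc : ℝ × ℝ → ℂ := fun p => φ ((p.2:ℂ) - (p.1:ℂ))
    * ((conj ((φ₂ : ℝ → ℂ) p.1) * (ψ₁ : ℝ → ℂ) p.1)
      * (conj ((S.adjFun ψ₂ : ℝ → ℂ) p.2) * (S.toFun φ₁ : ℝ → ℂ) p.2)) with hGcdef
  have hFcint : Integrable Fc ((volume : Measure ℝ).prod volume) := by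
    refine Integrable.bdd_mul (c := Mφ₀) ?_ ?_ ?_
    · exact hk.mul_prod hl
    · exact (continuous_conj.comp hφprodc).aestronglyMeasurable
    · exact Filter.Eventually.of_forall fun p => by
        simpa only [Function.comp_apply, RCLike.norm_conj] using hMφ₀ _ (hmemsub p.2 p.1)
  have hGcint : Integrable Gc ((volume : Measure ℝ).prod volume) := by
    refine Integrable.bdd_mul (c := Mφ₀) ?_ ?_ ?_
    · exact hk.mul_prod hl'
    · exact hφprodc.aestronglyMeasurable
    · exact Filter.Eventually.of_forall fun p => hMφ₀ _ (hmemsub p.2 p.1)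
  -- LHS as an integral
  have hLHS : ⟪τ.tmul φ₁ φ₂, (ContinuousLinearMap.adjoint Tφ) (τ.tmul ψ₁ ψ₂)⟫_ℂ
      = ∫ p : ℝ × ℝ, Fc p := by
    rw [ContinuousLinearMap.adjoint_inner_right, hinnerK]
    refine integral_congr_ae ?_
    filter_upwards [hTφ (τ.tmul φ₁ φ₂), hswap _ φ₁ φ₂ (hτ φ₁ φ₂), hτ ψ₁ ψ₂]
      with p h1 h2 h3
    rw [h1, h2, h3]
    simp only [hFcdef, map_mul]
    ring
  -- RHS as an integral
  have hRHS : ⟪τ.tmul φ₂ (S.adjFun ψ₂), Tφ (τ.tmul (S.toFun φ₁) ψ₁)⟫_ℂ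
      = ∫ p : ℝ × ℝ, Gc p := by
    rw [hinnerK]
    refine integral_congr_ae ?_
    filter_upwards [hτ φ₂ (S.adjFun ψ₂), hTφ (τ.tmul (S.toFun φ₁) ψ₁),
      hswap _ (S.toFun φ₁) ψ₁ (hτ (S.toFun φ₁) ψ₁)] with p h1 h2 h3
    rw [h1, h2, h3]
    simp only [hGcdef, map_mul]
    ring
  -- iterate the integrals
  have hLiter : (∫ p : ℝ × ℝ, Fc p)
      = ∫ s : ℝ, (conj ((φ₂ : ℝ → ℂ) s) * (ψ₁ : ℝ → ℂ) s)
          * ∫ θ : ℝ, conj (φ ((θ:ℂ) - (s:ℂ)))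
            * (conj ((φ₁ : ℝ → ℂ) θ) * (ψ₂ : ℝ → ℂ) θ) := by
    rw [hvol, MeasureTheory.integral_prod _ hFcint]
    refine integral_congr_ae (Filter.Eventually.of_forall fun s => ?_)
    beta_reduce
    rw [← integral_const_mul]
    congr 1
    funext θ
    simp only [hFcdef]
    ring
  have hRiter : (∫ p : ℝ × ℝ, Gc p)
      = ∫ s : ℝ, (conj ((φ₂ : ℝ → ℂ) s) * (ψ₁ : ℝ → ℂ) s)
          * ∫ θ : ℝ, conj ((S.adjFun ψ₂ : ℝ → ℂ) θ)
            * (φ ((θ:ℂ) - (s:ℂ)) * (S.toFun φ₁ : ℝ → ℂ) θ) := by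
    rw [hvol, MeasureTheory.integral_prod _ hGcint]
    refine integral_congr_ae (Filter.Eventually.of_forall fun s => ?_)
    beta_reduce
    rw [← integral_const_mul]
    congr 1
    funext θ
    simp only [hGcdef]
    ring
  rw [hLHS, hRHS, hLiter, hRiter]
  refine integral_congr_ae (Filter.Eventually.of_forall fun s => ?_)
  beta_reduce
  rw [crossing_key S hSgraph φ hφa hφc ⟨Mφ₀, hMφ₀⟩ hφbc φ₁ hφ₁ ψ₂ hψ₂ s]
end
end

section
/- Let (X, m, ι) be a C*-Frobenius algebra in a C*-tensor category C, with ev_X := ι*m and coev_X := m*ι. Then T := m*m satisfies the categorical crossing symmetry equation (1_{X⊗X} ⊗ ev_X)(1_X ⊗ T ⊗ 1_X)(coev_X ⊗ 1_{X⊗X}) = T* = T. -/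
noncomputable section
open CategoryTheory MonoidalCategory

/-- A dagger structure on a monoidal category (the algebraic part of a `C*`-tensor
category): an involutive, contravariant, monoidal star operation on morphisms. -/
class DaggerMonoidalCategory (C : Type*) [Category C] [MonoidalCategory C] where
  dag : ∀ {X Y : C}, (X ⟶ Y) → (Y ⟶ X)
  dag_dag : ∀ {X Y : C} (f : X ⟶ Y), dag (dag f) = f
  dag_id : ∀ X : C, dag (𝟙 X) = 𝟙 X
  dag_comp : ∀ {X Y Z : C} (f : X ⟶ Y) (g : Y ⟶ Z), dag (f ≫ g) = dag g ≫ dag f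
  dag_tensor : ∀ {X Y Z W : C} (f : X ⟶ Y) (g : Z ⟶ W), dag (f ⊗ₘ g) = dag f ⊗ₘ dag g
  dag_assoc : ∀ X Y Z : C, dag (α_ X Y Z).hom = (α_ X Y Z).inv
  dag_leftUnitor : ∀ X : C, dag (λ_ X).hom = (λ_ X).inv
  dag_rightUnitor : ∀ X : C, dag (ρ_ X).hom = (ρ_ X).inv

open DaggerMonoidalCategory

variable {C : Type*} [Category C] [MonoidalCategory C] [DaggerMonoidalCategory C]

/-- The categorical crossing map determined by a real object `X` with evaluation `ev` and
coevaluation `coev`: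
`𝔠_X(T) = (1_{X⊗X} ⊗ ev)(1_X ⊗ T ⊗ 1_X)(coev ⊗ 1_{X⊗X})` (with associators inserted). -/
def catCross {C : Type*} [Category C] [MonoidalCategory C] (X : C)
    (ev : X ⊗ X ⟶ 𝟙_ C) (coev : 𝟙_ C ⟶ X ⊗ X) (T : X ⊗ X ⟶ X ⊗ X) : X ⊗ X ⟶ X ⊗ X :=
  (λ_ (X ⊗ X)).inv ≫ (coev ▷ (X ⊗ X)) ≫ (α_ X X (X ⊗ X)).hom ≫
    (X ◁ (α_ X X X).inv) ≫ (X ◁ (T ▷ X)) ≫ (X ◁ (α_ X X X).hom) ≫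
    (α_ X X (X ⊗ X)).inv ≫ ((X ⊗ X) ◁ ev) ≫ (ρ_ (X ⊗ X)).hom

/-- Let `(X, m, ι)` be a `C*`-Frobenius algebra in a `C*`-tensor category,
with `ev = ι* ∘ m` and `coev = m* ∘ ι`. Then `T = m* ∘ m` is crossing symmetric:
`𝔠_X(T) = T* = T`. -/
theorem frobenius_mul_crossing_symmetric
    (X : C) (m : X ⊗ X ⟶ X) (ι : 𝟙_ C ⟶ X)
    (hassoc : (m ▷ X) ≫ m = (α_ X X X).hom ≫ (X ◁ m) ≫ m)
    (hunit_l : (ι ▷ X) ≫ m = (λ_ X).hom)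
    (hunit_r : (X ◁ ι) ≫ m = (ρ_ X).hom)
    (hfrob_l : (X ◁ dag m) ≫ (α_ X X X).inv ≫ (m ▷ X) = m ≫ dag m)
    (hfrob_r : (dag m ▷ X) ≫ (α_ X X X).hom ≫ (X ◁ m) = m ≫ dag m) :
    catCross X (m ≫ dag ι) (ι ≫ dag m) (m ≫ dag m) = dag (m ≫ dag m) ∧
      dag (m ≫ dag m) = m ≫ dag m := by
  have hdag : dag (m ≫ dag m) = m ≫ dag m := by rw [dag_comp, dag_dag]
  refine ⟨?_, hdag⟩
  rw [hdag]
  have hι : dag (X ◁ ι) = X ◁ dag ι := by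
    rw [← id_tensorHom, dag_tensor, dag_id, id_tensorHom]
  have key2 : dag m ≫ (X ◁ dag ι) = (ρ_ X).inv := by
    rw [← hι, ← dag_comp, hunit_r, dag_rightUnitor]
  have hf1 : (λ_ X).inv ≫ (ι ▷ X) ≫ (dag m ▷ X) ≫ (α_ X X X).hom ≫ (X ◁ m) = dag m := by
    slice_lhs 3 5 => rw [hfrob_r]
    slice_lhs 2 3 => rw [hunit_l]
    simp
  have hg : (dag m ▷ X) ≫ (α_ X X X).hom ≫ (X ◁ (m ≫ dag ι)) ≫ (ρ_ X).hom = m := by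
    rw [MonoidalCategory.whiskerLeft_comp]
    slice_lhs 1 3 => rw [hfrob_r]
    slice_lhs 2 3 => rw [key2]
    simp
  unfold catCross
  trans ((((λ_ X).inv ≫ (ι ▷ X) ≫ (dag m ▷ X) ≫ (α_ X X X).hom ≫ (X ◁ m)) ▷ X) ≫
      (α_ X X X).hom ≫
      (X ◁ ((dag m ▷ X) ≫ (α_ X X X).hom ≫ (X ◁ (m ≫ dag ι)) ≫ (ρ_ X).hom)))
  · monoidal
  · rw [hf1, hg]; exact hfrob_r
end
end
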